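/- For n ≥ 2, the subgroup K of even-degree, even-edge-count graphs on n+1 vertices is generated, as a group under symmetric difference, by the 4-cycle graphs on 0, i, k, j (with edges {0,i},{i,k},{k,j},{j,0}) for distinct i,j,k in {1,...,n}, together with their images under all permutations of the vertices {0,...,n}; equivalently, K is generated by all 4-cycles in the complete graph K_{n+1}. -/

import Mathlib

open Equiv Finset

abbrev Vtx (n : ℕ) := Fin (n+1)
abbrev Edge (n : ℕ) := {e : Sym2 (Vtx n) // ¬ e.IsDiag}
abbrev Graphs (n : ℕ) := Edge n → ZMod 2

/-- relabelling of edges by a permutation of vertices -/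
def permEdge {n : ℕ} (σ : Perm (Vtx n)) : Edge n ≃ Edge n where
  toFun e := ⟨Sym2.map σ e.1, by
    simpa [Sym2.isDiag_map σ.injective] using e.2⟩
  invFun e := ⟨Sym2.map σ.symm e.1, by
    simpa [Sym2.isDiag_map σ.symm.injective] using e.2⟩
  left_inv e := by
    ext1
    simp [Sym2.map_map]
  right_inv e := by
    ext1
    simp [Sym2.map_map]

/-- action of a vertex permutation on graphs -/
def gact {n : ℕ} (σ : Perm (Vtx n)) : Graphs n ≃+ Graphs n where
  toFun g := fun e => g ((permEdge σ).symm e)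
  invFun g := fun e => g (permEdge σ e)
  left_inv g := by funext e; simp
  right_inv g := by funext e; simp
  map_add' g h := rfl

lemma gact_mul {n : ℕ} (σ τ : Perm (Vtx n)) (g : Graphs n) :
    gact (σ * τ) g = gact σ (gact τ g) := by
  funext e
  simp only [gact, AddEquiv.coe_mk, Equiv.coe_fn_mk, Equiv.symm]
  congr 1
  ext1
  simp [permEdge, Sym2.map_map]
  rfl

/-- the action as a homomorphism to automorphisms, multiplicatively -/
def φn (n : ℕ) : Perm (Vtx n) →* MulAut (Multiplicative (Graphs n)) where
  toFun σ := AddEquiv.toMultiplicative (gact σ)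
  map_one' := by
    ext g
    simp [gact, permEdge, Equiv.Perm.one_symm, Sym2.map_id, Sym2.map_id']
  map_mul' σ τ := by
    ext g
    exact congrFun (gact_mul σ τ g.toAdd) _

/-- the ambient group `Graphs(n+1) ⋊ S_{n+1}` -/
abbrev DG (n : ℕ) := SemidirectProduct (Multiplicative (Graphs n)) (Perm (Vtx n)) (φn n)

/-- the single-edge graph with edge `{u,v}` -/
def single {n : ℕ} (u v : Vtx n) : Graphs n :=
  fun e => if e.1 = s(u, v) then 1 else 0

/-- the generator `x_m = (e_{0m}, (0 m))` -/
def xgen {n : ℕ} (m : Vtx n) : DG n :=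
  ⟨Multiplicative.ofAdd (single 0 m), Equiv.swap 0 m⟩

/-- the degree of a vertex in a graph -/
def deg {n : ℕ} (g : Graphs n) (v : Vtx n) : ℕ :=
  (Finset.univ.filter (fun e : Edge n => v ∈ e.1 ∧ g e = 1)).card

/-- the number of edges of a graph -/
def nedges {n : ℕ} (g : Graphs n) : ℕ :=
  (Finset.univ.filter (fun e : Edge n => g e = 1)).card

/-- all degrees even and an even number of edges -/
def evenGraph {n : ℕ} (g : Graphs n) : Prop :=
  (∀ v : Vtx n, Even (deg g v)) ∧ Even (nedges g)

/-- the subgroup generated by the `x_m`, `m = 1, …, n` -/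
def Dn (n : ℕ) : Subgroup (DG n) :=
  Subgroup.closure {x | ∃ m : Vtx n, m ≠ 0 ∧ x = xgen m}

/-- the complete graph -/
def complete (n : ℕ) : Graphs n := fun _ => 1
namespace Stmt10Aux
variable {n : ℕ}

lemma addself (g : Graphs n) : g + g = 0 := funext fun e => by
  have h : ∀ a : ZMod 2, a + a = 0 := by decide
  exact h _

lemma nsmul2 (g : Graphs n) : (2:ℕ) • g = 0 := by rw [two_nsmul]; exact addself g
lemma zsmul2 (g : Graphs n) : (2:ℤ) • g = 0 := by rw [two_zsmul]; exact addself g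

lemma single_comm (u v : Vtx n) : single u v = single v u := by
  funext e; simp only [single]; rw [Sym2.eq_swap]

/-- the edge with endpoints `x ≠ y` -/
def mkEdge (x y : Vtx n) (h : x ≠ y) : Edge n := ⟨s(x,y), by simp [Sym2.mk_isDiag_iff, h]⟩

lemma single_apply (x y : Vtx n) (h : x ≠ y) (e : Edge n) :
    single x y e = if e = mkEdge x y h then 1 else 0 := by
  simp only [single, mkEdge, Subtype.ext_iff]

lemma sum_single (x y : Vtx n) (h : x ≠ y) (s : Finset (Edge n)) :
    ∑ e ∈ s, single x y e = if mkEdge x y h ∈ s then 1 else 0 := by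
  simp only [single_apply x y h]
  rw [Finset.sum_ite_eq' s (mkEdge x y h) (fun _ => (1 : ZMod 2))]

/-- parity of degree, as a ZMod 2 sum -/
def degSum (v : Vtx n) (g : Graphs n) : ZMod 2 :=
  ∑ e ∈ Finset.univ.filter (fun e : Edge n => v ∈ e.1), g e

def edgeSum (g : Graphs n) : ZMod 2 := ∑ e : Edge n, g e

lemma degSum_add (v : Vtx n) (g h : Graphs n) :
    degSum v (g + h) = degSum v g + degSum v h := by
  simp [degSum, Finset.sum_add_distrib]

lemma edgeSum_add (g h : Graphs n) : edgeSum (g + h) = edgeSum g + edgeSum h := by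
  simp [edgeSum, Finset.sum_add_distrib]

lemma cast_card_filter (s : Finset (Edge n)) (g : Graphs n) :
    ((s.filter (fun e => g e = 1)).card : ZMod 2) = ∑ e ∈ s, g e := by
  rw [Finset.card_filter]
  push_cast
  congr 1
  funext e
  have : ∀ a : ZMod 2, (if a = 1 then (1:ZMod 2) else 0) = a := by decide
  rw [← this (g e)]
  simp

lemma even_iff_cast (m : ℕ) : Even m ↔ (m : ZMod 2) = 0 := by
  rw [ZMod.natCast_eq_zero_iff m 2]
  exact ⟨fun ⟨k,hk⟩ => ⟨k, by omega⟩, fun ⟨k,hk⟩ => ⟨k, by omega⟩⟩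

lemma degSum_spec (v : Vtx n) (g : Graphs n) :
    Even (deg g v) ↔ degSum v g = 0 := by
  rw [even_iff_cast, deg, degSum]
  rw [show (Finset.univ.filter (fun e : Edge n => v ∈ e.1 ∧ g e = 1)) =
      (Finset.univ.filter (fun e : Edge n => v ∈ e.1)).filter (fun e => g e = 1) by
    rw [Finset.filter_filter]]
  rw [cast_card_filter]

lemma edgeSum_spec (g : Graphs n) : Even (nedges g) ↔ edgeSum g = 0 := by
  rw [even_iff_cast, nedges, edgeSum, cast_card_filter]

end Stmt10Aux
namespace Stmt10Aux
variable {n : ℕ}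

lemma negself (g : Graphs n) : -g = g := funext fun e => by
  have h : ∀ a : ZMod 2, -a = a := by decide
  exact h _

/-- the subgroup of even graphs -/
def Kgrp (n : ℕ) : AddSubgroup (Graphs n) where
  carrier := {g | (∀ v, degSum v g = 0) ∧ edgeSum g = 0}
  add_mem' := by
    rintro a b ⟨ha1, ha2⟩ ⟨hb1, hb2⟩
    exact ⟨fun v => by rw [degSum_add, ha1 v, hb1 v, add_zero],
      by rw [edgeSum_add, ha2, hb2, add_zero]⟩
  zero_mem' := ⟨fun v => by simp [degSum], by simp [edgeSum]⟩
  neg_mem' := by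
    rintro a ⟨ha1, ha2⟩
    rw [negself]
    exact ⟨ha1, ha2⟩

lemma mem_Kgrp (g : Graphs n) : g ∈ Kgrp n ↔ evenGraph g := by
  unfold evenGraph
  rw [forall_congr' (fun v => degSum_spec v g), edgeSum_spec]
  rfl

lemma degSum_single (w x y : Vtx n) (h : x ≠ y) :
    degSum w (single x y) = if w ∈ s(x,y) then 1 else 0 := by
  rw [degSum, sum_single x y h]
  simp [mkEdge]

lemma edgeSum_single (x y : Vtx n) (h : x ≠ y) : edgeSum (single x y) = 1 := by
  rw [edgeSum, sum_single x y h]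
  simp

/-- the set of 4-cycles -/
def cycSet (n : ℕ) : Set (Graphs n) := {c : Graphs n | ∃ a b u v : Vtx n,
        a ≠ b ∧ a ≠ u ∧ a ≠ v ∧ b ≠ u ∧ b ≠ v ∧ u ≠ v ∧
        c = single a b + single b u + single u v + single v a}

lemma cyc_mem_K : cycSet n ⊆ (Kgrp n : Set (Graphs n)) := by
  rintro c ⟨a, b, u, v, hab, hau, hav, hbu, hbv, huv, rfl⟩
  constructor
  · intro w
    rw [degSum_add, degSum_add, degSum_add, degSum_single w a b hab,
      degSum_single w b u hbu, degSum_single w u v huv, degSum_single w v a (Ne.symm hav)]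
    by_cases h1 : w = a <;> by_cases h2 : w = b <;> by_cases h3 : w = u <;>
      by_cases h4 : w = v <;> simp_all [Sym2.mem_iff] <;> decide
  · rw [edgeSum_add, edgeSum_add, edgeSum_add, edgeSum_single a b hab,
      edgeSum_single b u hbu, edgeSum_single u v huv, edgeSum_single v a (Ne.symm hav)]
    decide

lemma closure_le_K : AddSubgroup.closure (cycSet n) ≤ Kgrp n :=
  (AddSubgroup.closure_le _).mpr cyc_mem_K

end Stmt10Aux
namespace Stmt10Aux
variable {n : ℕ}

/-- triangle through 0 -/
def tri (i j : Vtx n) : Graphs n := single 0 i + single i j + single j 0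

lemma mul2 (g : Graphs n) : 2 * g = 0 := funext fun e => by
  have h : ∀ a : ZMod 2, 2 * a = 0 := by decide
  exact h _

lemma cyc_mem (a b u v : Vtx n) (hab : a ≠ b) (hau : a ≠ u) (hav : a ≠ v)
    (hbu : b ≠ u) (hbv : b ≠ v) (huv : u ≠ v) :
    single a b + single b u + single u v + single v a ∈ AddSubgroup.closure (cycSet n) :=
  AddSubgroup.subset_closure ⟨a, b, u, v, hab, hau, hav, hbu, hbv, huv, rfl⟩

lemma combo_mem (i j k l : Vtx n) (hi : i ≠ 0) (hj : j ≠ 0) (hk : k ≠ 0) (hl : l ≠ 0)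
    (hij : i ≠ j) (hkl : k ≠ l) (hne : s(i,j) ≠ s(k,l)) :
    tri i j + tri k l ∈ AddSubgroup.closure (cycSet n) := by
  by_cases hik : i = k
  · subst hik
    have hjl : j ≠ l := fun h => hne (by rw [h])
    have : tri i j + tri i l = single j i + single i l + single l 0 + single 0 j := by
      unfold tri
      rw [single_comm j i, single_comm j 0, single_comm l 0]
      abel_nf
      simp [zsmul2, nsmul2, mul2]
    rw [this]
    exact cyc_mem j i l 0 (Ne.symm hij) hjl hj hkl hi hl
  by_cases hil : i = l
  · subst hil
    have hjk : j ≠ k := fun h => hne (by rw [h, Sym2.eq_swap])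
    have : tri i j + tri k i = single i j + single j 0 + single 0 k + single k i := by
      unfold tri
      rw [single_comm i 0]
      abel_nf
      simp [zsmul2, nsmul2, mul2]
    rw [this]
    exact cyc_mem i j 0 k hij hi (fun h => hkl h.symm) hj hjk (Ne.symm hk)
  by_cases hjk : j = k
  · subst hjk
    have hil2 : i ≠ l := fun h => hne (by rw [h, Sym2.eq_swap])
    have : tri i j + tri j l = single 0 i + single i j + single j l + single l 0 := by
      unfold tri
      rw [single_comm j 0]
      abel_nf
      simp [zsmul2, nsmul2, mul2]
    rw [this]
    exact cyc_mem 0 i j l (Ne.symm hi) (Ne.symm hj) (Ne.symm hl) hij hil2 hkl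
  by_cases hjl : j = l
  · subst hjl
    have : tri i j + tri k j = single 0 i + single i j + single j k + single k 0 := by
      unfold tri
      rw [single_comm j 0, single_comm k j, single_comm k 0]
      abel_nf
      simp [zsmul2, nsmul2, mul2]
    rw [this]
    exact cyc_mem 0 i j k (Ne.symm hi) (Ne.symm hj) (Ne.symm hk) hij hik (fun h => hkl h.symm)
  · have : tri i j + tri k l =
        (single 0 i + single i j + single j l + single l 0) +
        (single 0 k + single k l + single l j + single j 0) := by
      unfold tri
      rw [single_comm l j]
      abel_nf
      simp [zsmul2, nsmul2, mul2]
    rw [this]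
    exact AddSubgroup.add_mem _
      (cyc_mem 0 i j l (Ne.symm hi) (Ne.symm hj) (Ne.symm hl) hij hil hjl)
      (cyc_mem 0 k l j (Ne.symm hk) (Ne.symm hl) (Ne.symm hj) hkl (fun h => hjk h.symm) (fun h => hjl h.symm))

end Stmt10Aux
namespace Stmt10Aux
variable {n : ℕ}

lemma zmod_ne_one : ∀ a : ZMod 2, ¬ a = 1 → a = 0 := by decide

lemma mem_Kgrp_iff (g : Graphs n) :
    g ∈ Kgrp n ↔ (∀ v, degSum v g = 0) ∧ edgeSum g = 0 := Iff.rfl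

/-- the non-star support -/
def Ag (g : Graphs n) : Finset (Edge n) :=
  Finset.univ.filter (fun e => (0:Vtx n) ∉ e.1 ∧ g e = 1)

lemma edge_rep' (z : Sym2 (Vtx n)) (hd : ¬ z.IsDiag) :
    ∃ x y, x ≠ y ∧ z = s(x,y) := by
  induction z using Sym2.ind with
  | _ x y =>
    exact ⟨x, y, fun h => hd (Sym2.mk_isDiag_iff.mpr h), rfl⟩

lemma edge_rep (e : Edge n) (h0 : (0:Vtx n) ∉ e.1) :
    ∃ i j, i ≠ 0 ∧ j ≠ 0 ∧ i ≠ j ∧ e.1 = s(i,j) := by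
  obtain ⟨x, y, hxy, hz⟩ := edge_rep' e.1 e.2
  refine ⟨x, y, fun h => h0 ?_, fun h => h0 ?_, hxy, hz⟩
  · rw [hz, ← h]; exact Sym2.mem_mk_left x y
  · rw [hz, ← h]; exact Sym2.mem_mk_right x y

lemma inner_sum (e : Edge n) (c : ZMod 2) :
    ∑ m ∈ Finset.univ.erase (0:Vtx n), (if m ∈ e.1 then c else 0)
      = if (0:Vtx n) ∈ e.1 then c else 0 := by
  obtain ⟨x, y, hxy, hz⟩ := edge_rep' e.1 e.2
  rw [← Finset.sum_filter]
  have hfil : (Finset.univ.erase (0:Vtx n)).filter (fun m => m ∈ e.1)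
      = ({x, y} : Finset (Vtx n)).erase 0 := by
    ext m
    simp [hz, Sym2.mem_iff, Finset.mem_erase, and_comm]
  rw [hfil, Finset.sum_const]
  by_cases h0 : (0:Vtx n) ∈ e.1
  · rw [if_pos h0]
    rw [hz, Sym2.mem_iff] at h0
    have hcard : (({x, y} : Finset (Vtx n)).erase 0).card = 1 := by
      rcases h0 with h | h
      · have hy : y ≠ 0 := fun hh => hxy (h.symm.trans hh.symm)
        have : ({x, y} : Finset (Vtx n)).erase 0 = {y} := by
          ext m
          simp only [Finset.mem_erase, Finset.mem_insert, Finset.mem_singleton]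
          constructor
          · rintro ⟨hm0, (rfl | rfl)⟩
            · exact absurd h.symm hm0
            · rfl
          · rintro rfl
            exact ⟨hy, Or.inr rfl⟩
        rw [this]; exact Finset.card_singleton y
      · have hx : x ≠ 0 := fun hh => hxy (hh.trans h)
        have : ({x, y} : Finset (Vtx n)).erase 0 = {x} := by
          ext m
          simp only [Finset.mem_erase, Finset.mem_insert, Finset.mem_singleton]
          constructor
          · rintro ⟨hm0, (rfl | rfl)⟩
            · rfl
            · exact absurd h.symm hm0
          · rintro rfl
            exact ⟨hx, Or.inl rfl⟩
        rw [this]; exact Finset.card_singleton x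
    rw [hcard, one_smul]
  · rw [if_neg h0]
    rw [hz, Sym2.mem_iff] at h0
    push_neg at h0
    have hcard : (({x, y} : Finset (Vtx n)).erase 0).card = 2 := by
      rw [Finset.erase_eq_of_notMem (by
        simp only [Finset.mem_insert, Finset.mem_singleton]
        rintro (rfl | rfl)
        · exact h0.1 rfl
        · exact h0.2 rfl)]
      exact Finset.card_pair hxy
    rw [hcard]
    have h2 : ∀ a : ZMod 2, 2 • a = 0 := by decide
    exact h2 c

lemma star_sum (g : Graphs n) :
    ∑ m ∈ Finset.univ.erase (0:Vtx n), degSum m g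
      = ∑ e : Edge n, if (0:Vtx n) ∈ e.1 then g e else 0 := by
  unfold degSum
  calc ∑ m ∈ Finset.univ.erase (0:Vtx n),
        ∑ e ∈ Finset.univ.filter (fun e : Edge n => m ∈ e.1), g e
      = ∑ m ∈ Finset.univ.erase (0:Vtx n), ∑ e : Edge n, if m ∈ e.1 then g e else 0 := by
        simp [Finset.sum_filter]
    _ = ∑ e : Edge n, ∑ m ∈ Finset.univ.erase (0:Vtx n), if m ∈ e.1 then g e else 0 :=
        Finset.sum_comm
    _ = ∑ e : Edge n, if (0:Vtx n) ∈ e.1 then g e else 0 := by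
        exact Finset.sum_congr rfl (fun e _ => inner_sum e (g e))

lemma Ag_even (g : Graphs n) (hg : g ∈ Kgrp n) : Even (Ag g).card := by
  obtain ⟨h1, h2⟩ := hg
  rw [even_iff_cast]
  have : ((Ag g).card : ZMod 2) = ∑ e : Edge n, if (0:Vtx n) ∉ e.1 then g e else 0 := by
    unfold Ag
    rw [show (Finset.univ.filter (fun e : Edge n => (0:Vtx n) ∉ e.1 ∧ g e = 1))
        = (Finset.univ.filter (fun e : Edge n => (0:Vtx n) ∉ e.1)).filter
            (fun e => g e = 1) by rw [Finset.filter_filter],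
      cast_card_filter, Finset.sum_filter]
  rw [this]
  have hsplit : edgeSum g = (∑ e : Edge n, if (0:Vtx n) ∈ e.1 then g e else 0)
      + ∑ e : Edge n, if (0:Vtx n) ∉ e.1 then g e else 0 := by
    unfold edgeSum
    rw [← Finset.sum_add_distrib]
    refine Finset.sum_congr rfl (fun e _ => ?_)
    by_cases h : (0:Vtx n) ∈ e.1 <;> simp [h]
  have hstar : (∑ e : Edge n, if (0:Vtx n) ∈ e.1 then g e else 0) = 0 := by
    rw [← star_sum g]
    exact Finset.sum_eq_zero (fun m _ => h1 m)
  rw [h2, hstar, zero_add] at hsplit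
  exact hsplit.symm

end Stmt10Aux
namespace Stmt10Aux
variable {n : ℕ}

lemma star_rep (e : Edge n) (h0 : (0:Vtx n) ∈ e.1) : ∃ m, m ≠ 0 ∧ e.1 = s(0,m) := by
  obtain ⟨x, y, hxy, hz⟩ := edge_rep' e.1 e.2
  rw [hz, Sym2.mem_iff] at h0
  rcases h0 with h | h
  · exact ⟨y, fun hh => hxy (h.symm.trans hh.symm), by rw [hz, h]⟩
  · exact ⟨x, fun hh => hxy (hh.trans h), by rw [hz, h, Sym2.eq_swap]⟩

lemma tri_nonstar (i j : Vtx n) (hi : i ≠ 0) (hj : j ≠ 0) (e : Edge n)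
    (h0 : (0:Vtx n) ∉ e.1) :
    tri i j e = if e.1 = s(i,j) then 1 else 0 := by
  simp only [tri, Pi.add_apply, single]
  rw [if_neg (show ¬ (e.1 = s((0:Vtx n), i)) from
      fun h => h0 (by rw [h]; exact Sym2.mem_mk_left 0 i)),
    if_neg (show ¬ (e.1 = s(j, (0:Vtx n))) from
      fun h => h0 (by rw [h]; exact Sym2.mem_mk_right j 0)),
    zero_add, add_zero]

lemma mem_of_even_aux :
    ∀ N (g : Graphs n), g ∈ Kgrp n → (Ag g).card = N →
      g ∈ AddSubgroup.closure (cycSet n) := by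
  intro N
  induction N using Nat.strong_induction_on with
  | _ N ih =>
  intro g hg hN
  rcases Nat.lt_or_ge N 2 with hN2 | hN2
  · -- N = 0 since N even
    have heven := Ag_even g hg
    rw [hN] at heven
    have hN0 : N = 0 := by rcases heven with ⟨k, hk⟩; omega
    subst hN0
    have hA : Ag g = ∅ := Finset.card_eq_zero.mp hN
    have hnot : ∀ e' : Edge n, (0:Vtx n) ∉ e'.1 → g e' = 0 := by
      intro e' h0
      refine zmod_ne_one _ (fun h1 => ?_)
      have hmem : e' ∈ Ag g := Finset.mem_filter.mpr ⟨Finset.mem_univ _, h0, h1⟩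
      rw [hA] at hmem
      exact absurd hmem (Finset.notMem_empty _)
    have hg0 : g = 0 := by
      funext e
      by_cases h0 : (0:Vtx n) ∈ e.1
      · obtain ⟨m, hm, hzm⟩ := star_rep e h0
        have hdeg : degSum m g = g e := by
          unfold degSum
          refine Finset.sum_eq_single_of_mem e
            (Finset.mem_filter.mpr ⟨Finset.mem_univ _, by rw [hzm]; exact Sym2.mem_mk_right 0 m⟩)
            (fun e' he' hne => ?_)
          by_cases h0' : (0:Vtx n) ∈ e'.1
          · exfalso
            have hm' : m ∈ e'.1 := (Finset.mem_filter.mp he').2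
            have : e'.1 = s(0,m) := (Sym2.mem_and_mem_iff (Ne.symm hm)).mp ⟨h0', hm'⟩
            exact hne (Subtype.ext (this.trans hzm.symm))
          · exact hnot e' h0'
        rw [← hdeg]
        exact hg.1 m
      · exact hnot e h0
    rw [hg0]
    exact AddSubgroup.zero_mem _
  · -- N ≥ 2
    have h2 : 1 < (Ag g).card := by omega
    obtain ⟨e1, he1, e2, he2, hne⟩ := Finset.one_lt_card.mp h2
    have he1' := Finset.mem_filter.mp he1
    have he2' := Finset.mem_filter.mp he2
    obtain ⟨i, j, hi, hj, hij, hz1⟩ := edge_rep e1 he1'.2.1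
    obtain ⟨k, l, hk, hl, hkl, hz2⟩ := edge_rep e2 he2'.2.1
    have hzz : s(i,j) ≠ s(k,l) := fun h => hne (Subtype.ext (hz1.trans (h.trans hz2.symm)))
    set h : Graphs n := tri i j + tri k l with hh
    have hmem : h ∈ AddSubgroup.closure (cycSet n) :=
      combo_mem i j k l hi hj hk hl hij hkl hzz
    have hKh : h ∈ Kgrp n := closure_le_K hmem
    have hKgh : g + h ∈ Kgrp n := AddSubgroup.add_mem _ hg hKh
    have hAg : Ag (g + h) = Ag g \ {e1, e2} := by
      ext e
      simp only [Ag, Finset.mem_filter, Finset.mem_univ, true_and, Finset.mem_sdiff,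
        Finset.mem_insert, Finset.mem_singleton]
      by_cases h0 : (0:Vtx n) ∈ e.1
      · constructor
        · rintro ⟨habs, -⟩; exact absurd h0 habs
        · rintro ⟨⟨habs, -⟩, -⟩; exact absurd h0 habs
      · have hhe : h e = (if e.1 = s(i,j) then 1 else 0) + (if e.1 = s(k,l) then 1 else 0) := by
          rw [hh]
          show tri i j e + tri k l e = _
          rw [tri_nonstar i j hi hj e h0, tri_nonstar k l hk hl e h0]
        by_cases hee1 : e = e1
        · subst hee1
          have hval : (g + h) e = 0 := by
            rw [Pi.add_apply, he1'.2.2, hhe, if_pos hz1,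
              if_neg (fun hc => hzz (hz1 ▸ hc))]
            decide
          constructor
          · rintro ⟨-, hc⟩; rw [hval] at hc; exact absurd hc (by decide)
          · rintro ⟨-, hc⟩; exact absurd (Or.inl rfl) hc
        · by_cases hee2 : e = e2
          · subst hee2
            have hval : (g + h) e = 0 := by
              rw [Pi.add_apply, he2'.2.2, hhe, if_pos hz2,
                if_neg (fun hc => hzz (hc.symm.trans hz2))]
              decide
            constructor
            · rintro ⟨-, hc⟩; rw [hval] at hc; exact absurd hc (by decide)
            · rintro ⟨-, hc⟩; exact absurd (Or.inr rfl) hc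
          · have hhe0 : h e = 0 := by
              rw [hhe, if_neg (fun hc => hee1 (Subtype.ext (hc.trans hz1.symm))),
                if_neg (fun hc => hee2 (Subtype.ext (hc.trans hz2.symm))), add_zero]
            rw [Pi.add_apply, hhe0, add_zero]
            constructor
            · rintro ⟨ha, hb⟩; exact ⟨⟨ha, hb⟩, fun hc => hc.elim hee1 hee2⟩
            · rintro ⟨⟨ha, hb⟩, -⟩; exact ⟨ha, hb⟩
    have hsub : ({e1, e2} : Finset (Edge n)) ⊆ Ag g := by
      intro x hx
      rcases Finset.mem_insert.mp hx with rfl | hx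
      · exact he1
      · rw [Finset.mem_singleton.mp hx]; exact he2
    have hcard : (Ag (g + h)).card = N - 2 := by
      rw [hAg, Finset.card_sdiff_of_subset hsub, hN, Finset.card_pair hne]
    have hgh := ih (N - 2) (by omega) (g + h) hKgh hcard
    have hgeq : g = (g + h) + h := by rw [add_assoc, addself, add_zero]
    rw [hgeq]
    exact AddSubgroup.add_mem _ hgh hmem

lemma mem_of_even (g : Graphs n) (hg : g ∈ Kgrp n) :
    g ∈ AddSubgroup.closure (cycSet n) :=
  mem_of_even_aux (Ag g).card g hg rfl

end Stmt10Aux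
/-- For `n ≥ 2`, the group of even-degree, even-edge-count graphs on `n+1` vertices is
generated, under symmetric difference, by all 4-cycles in the complete graph. -/
theorem stmt10 (n : ℕ) (hn : 2 ≤ n) (g : Graphs n) :
    g ∈ AddSubgroup.closure {c : Graphs n | ∃ a b u v : Vtx n,
        a ≠ b ∧ a ≠ u ∧ a ≠ v ∧ b ≠ u ∧ b ≠ v ∧ u ≠ v ∧
        c = single a b + single b u + single u v + single v a} ↔
      evenGraph g := by
  exact ⟨fun h => (Stmt10Aux.mem_Kgrp g).mp (Stmt10Aux.closure_le_K h),
    fun h => Stmt10Aux.mem_of_even g ((Stmt10Aux.mem_Kgrp g).mpr h)⟩
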